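/- Let δ₀ ∈ (0, δ₀*) where δ₀* = 2(η − α)/κ². Let {α_n} ⊆ (0, δ₀] with α_n → 0, and let {β_n} ⊆ [0,1] with 0 < liminf β_n ≤ limsup β_n < 1. Let y_0 ∈ Q and define y_{n+1} = β_n y_n + (1 − β_n) P_Q(α_n f(y_n) + (T y_n − α_n F(T y_n))). Then ‖y_n − T y_n‖ → 0. -/

import Mathlib

open scoped RealInnerProductSpace
open Filter

private lemma hpa_comb_sq {H : Type*} [NormedAddCommGroup H] [InnerProductSpace ℝ H]
    (b : ℝ) (u v : H) :
    ‖b • u + (1 - b) • v‖ ^ 2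
      = b * ‖u‖ ^ 2 + (1 - b) * ‖v‖ ^ 2 - b * (1 - b) * ‖u - v‖ ^ 2 := by
  have h1 := norm_add_sq_real (b • u) ((1 - b) • v)
  have h2 := norm_sub_sq_real u v
  rw [real_inner_smul_left, real_inner_smul_right, norm_smul, norm_smul] at h1
  simp only [Real.norm_eq_abs] at h1
  rw [mul_pow, mul_pow, sq_abs, sq_abs] at h1
  linear_combination h1 + (b * (1 - b)) * h2

private lemma hpa_norm_le_of_sq_le_mul {a b : ℝ} (ha : 0 ≤ a) (hb : 0 ≤ b)
    (h : a ^ 2 ≤ b * a) : a ≤ b := by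
  rcases eq_or_lt_of_le ha with h0 | h0
  · linarith
  · nlinarith

private lemma hpa_eta_le_kappa {κ η X ip nf : ℝ} (hX : 0 < X)
    (hm : η * X ^ 2 ≤ ip) (hcs : ip ≤ nf * X) (hL : nf ≤ κ * X) : η ≤ κ := by
  nlinarith [mul_le_mul_of_nonneg_right hL hX.le, mul_pos hX hX]

private lemma hpa_step_half {κ η δ₀ a : ℝ} (hκ : 0 < κ) (hη : 0 < η) (hηκ : η ≤ κ)
    (ha : 0 < a) (haδ : a ≤ δ₀) :
    a * (η - δ₀ * κ ^ 2 / 2) ≤ 1 / 2 := by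
  have hκ2 : 0 < κ ^ 2 := by positivity
  have h1 : a * a * κ ^ 2 ≤ a * δ₀ * κ ^ 2 := by
    nlinarith [mul_nonneg (mul_nonneg ha.le (sub_nonneg.2 haδ)) hκ2.le]
  have h2 : η ^ 2 ≤ κ ^ 2 := by nlinarith
  have h3 : 2 * a * η * κ ^ 2 - a ^ 2 * κ ^ 2 * κ ^ 2 ≤ η ^ 2 := by
    nlinarith [sq_nonneg (a * κ ^ 2 - η)]
  rw [← sub_nonneg]
  have h5 : 0 ≤ κ ^ 2 * (1 / 2 - a * (η - δ₀ * κ ^ 2 / 2)) := by nlinarith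
  nlinarith

private lemma hpa_contract {H : Type*} [NormedAddCommGroup H] [InnerProductSpace ℝ H]
    (F : H → H) {κ η δ₀ τ a : ℝ} {u v : H}
    (hκ2 : 0 < κ ^ 2)
    (hτdef : τ = η - δ₀ * κ ^ 2 / 2)
    (ha : 0 < a) (haδ : a ≤ δ₀)
    (hατ : a * τ ≤ 1 / 2)
    (hmono : η * ‖u - v‖ ^ 2 ≤ ⟪F u - F v, u - v⟫)
    (hLip : ‖F u - F v‖ ≤ κ * ‖u - v‖) :
    ‖(u - a • F u) - (v - a • F v)‖ ≤ (1 - a * τ) * ‖u - v‖ := by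
  have hvec : (u - a • F u) - (v - a • F v) = (u - v) - a • (F u - F v) := by
    rw [smul_sub]; abel
  rw [hvec]
  have hexp : ‖(u - v) - a • (F u - F v)‖ ^ 2
      = ‖u - v‖ ^ 2 - 2 * a * ⟪F u - F v, u - v⟫ + a ^ 2 * ‖F u - F v‖ ^ 2 := by
    rw [norm_sub_sq_real, real_inner_smul_right, norm_smul, Real.norm_eq_abs,
      mul_pow, sq_abs, real_inner_comm]
    ring
  have hFsq : ‖F u - F v‖ ^ 2 ≤ κ ^ 2 * ‖u - v‖ ^ 2 := by
    have := pow_le_pow_left₀ (norm_nonneg (F u - F v)) hLip 2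
    rw [mul_pow] at this
    linarith
  have h5 : (1 - a * τ) ^ 2 * ‖u - v‖ ^ 2
      = ‖u - v‖ ^ 2 - 2 * a * (η * ‖u - v‖ ^ 2)
        + (a * δ₀ * κ ^ 2 + a ^ 2 * τ ^ 2 - a ^ 2 * κ ^ 2) * ‖u - v‖ ^ 2
        + a ^ 2 * (κ ^ 2 * ‖u - v‖ ^ 2) := by
    rw [hτdef]; ring
  have key : ‖(u - v) - a • (F u - F v)‖ ^ 2 ≤ ((1 - a * τ) * ‖u - v‖) ^ 2 := by
    rw [hexp, mul_pow, h5]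
    have h1 : 2 * a * (η * ‖u - v‖ ^ 2) ≤ 2 * a * ⟪F u - F v, u - v⟫ :=
      mul_le_mul_of_nonneg_left hmono (by positivity)
    have h2 : a ^ 2 * ‖F u - F v‖ ^ 2 ≤ a ^ 2 * (κ ^ 2 * ‖u - v‖ ^ 2) :=
      mul_le_mul_of_nonneg_left hFsq (sq_nonneg a)
    have h3 : 0 ≤ (a * δ₀ * κ ^ 2 + a ^ 2 * τ ^ 2 - a ^ 2 * κ ^ 2) * ‖u - v‖ ^ 2 := by
      have hδa : a ^ 2 * κ ^ 2 ≤ a * δ₀ * κ ^ 2 := by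
        nlinarith [mul_nonneg (mul_nonneg ha.le (sub_nonneg.2 haδ)) hκ2.le]
      have h4 : 0 ≤ a ^ 2 * τ ^ 2 := by positivity
      have h6 : 0 ≤ ‖u - v‖ ^ 2 := sq_nonneg _
      nlinarith
    linarith
  have hR : 0 ≤ (1 - a * τ) * ‖u - v‖ :=
    mul_nonneg (by linarith) (norm_nonneg _)
  exact (pow_le_pow_iff_left₀ (norm_nonneg _) hR two_ne_zero).mp key

private lemma hpa_proj_pt {H : Type*} [NormedAddCommGroup H] [InnerProductSpace ℝ H]
    {x Px q : H} (h : ⟪x - Px, q - Px⟫ ≤ 0) : ‖Px - q‖ ≤ ‖x - q‖ := by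
  have hid : ⟪Px - q, Px - q⟫ ≤ ⟪x - q, Px - q⟫ := by
    have e : ⟪x - q, Px - q⟫ - ⟪Px - q, Px - q⟫ = - ⟪x - Px, q - Px⟫ := by
      simp only [inner_sub_left, inner_sub_right]
      ring_nf
    linarith
  rw [real_inner_self_eq_norm_sq] at hid
  exact hpa_norm_le_of_sq_le_mul (norm_nonneg _) (norm_nonneg _)
    (le_trans hid (real_inner_le_norm _ _))

private lemma hpa_proj_nonexp {H : Type*} [NormedAddCommGroup H] [InnerProductSpace ℝ H]
    {x Px x' Px' : H} (h1 : ⟪x - Px, Px' - Px⟫ ≤ 0) (h2 : ⟪x' - Px', Px - Px'⟫ ≤ 0) :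
    ‖Px - Px'‖ ≤ ‖x - x'‖ := by
  have hid : ⟪Px - Px', Px - Px'⟫ ≤ ⟪x - x', Px - Px'⟫ := by
    have e : ⟪x - x', Px - Px'⟫ - ⟪Px - Px', Px - Px'⟫
        = - ⟪x - Px, Px' - Px⟫ - ⟪x' - Px', Px - Px'⟫ := by
      simp only [inner_sub_left, inner_sub_right]
      ring_nf
    linarith
  rw [real_inner_self_eq_norm_sq] at hid
  exact hpa_norm_le_of_sq_le_mul (norm_nonneg _) (norm_nonneg _)
    (le_trans hid (real_inner_le_norm _ _))

private lemma hpa_sq_step {dn dn1 e M M' δ₀ : ℝ} (hd1 : 0 ≤ dn1)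
    (hd : dn1 ≤ dn + e * M') (hdn : 0 ≤ dn) (hdM : dn ≤ 2 * M)
    (he : 0 ≤ e) (heδ : e ≤ 2 * δ₀) (hM' : 0 ≤ M') :
    dn1 ^ 2 ≤ dn ^ 2 + e * (M' * (4 * M + 2 * δ₀ * M')) := by
  have h1 : dn1 ^ 2 ≤ (dn + e * M') ^ 2 :=
    pow_le_pow_left₀ hd1 hd 2
  nlinarith [mul_nonneg (mul_nonneg (sub_nonneg.2 hdM) he) hM',
    mul_nonneg (mul_nonneg (sub_nonneg.2 heδ) he) (sq_nonneg M')]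

private lemma hpa_z_sq {Z s M C δ₀ a : ℝ} (h4 : Z ≤ (s + a * C) ^ 2)
    (ha : 0 < a) (haδ : a ≤ δ₀) (hs0 : 0 ≤ s) (hsM : s ≤ M) (hC : 0 ≤ C) :
    Z ≤ s ^ 2 + a * (2 * M * C + δ₀ * C ^ 2) := by
  nlinarith [mul_nonneg (mul_nonneg (sub_nonneg.2 hsM) ha.le) hC,
    mul_nonneg (mul_nonneg ha.le (sub_nonneg.2 haδ)) (sq_nonneg C)]

/-- Under the condition `0 < liminf β_n ≤ limsup β_n < 1`, the unperturbed sequence of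
the algorithm (HPA) satisfies `‖y_n - T y_n‖ → 0`. -/
theorem hpa_asymptotic_fixed_point_h1
    {H : Type*} [NormedAddCommGroup H] [InnerProductSpace ℝ H] [CompleteSpace H]
    (Q : Set H) (hQne : Q.Nonempty) (hQclosed : IsClosed Q) (hQconvex : Convex ℝ Q)
    (T f F : H → H)
    (hTmaps : ∀ x ∈ Q, T x ∈ Q)
    (hTnonexp : ∀ x ∈ Q, ∀ y ∈ Q, ‖T x - T y‖ ≤ ‖x - y‖)
    (hfix : ∃ p ∈ Q, T p = p)
    (αf : ℝ) (hαf : 0 ≤ αf)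
    (hfLip : ∀ x ∈ Q, ∀ y ∈ Q, ‖f x - f y‖ ≤ αf * ‖x - y‖)
    (κ η : ℝ) (hκ : 0 < κ) (hη : 0 < η)
    (hFLip : ∀ x ∈ Q, ∀ y ∈ Q, ‖F x - F y‖ ≤ κ * ‖x - y‖)
    (hFmono : ∀ x ∈ Q, ∀ y ∈ Q, η * ‖x - y‖ ^ 2 ≤ ⟪F x - F y, x - y⟫)
    (hαη : αf < η)
    (PQ : H → H)
    (hPQ : ∀ x : H, PQ x ∈ Q ∧ ∀ y ∈ Q, ⟪x - PQ x, y - PQ x⟫ ≤ 0)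
    (δ₀ : ℝ) (hδ₀ : δ₀ ∈ Set.Ioo 0 (2 * (η - αf) / κ ^ 2))
    (α β : ℕ → ℝ)
    (hα : ∀ n, α n ∈ Set.Ioc 0 δ₀)
    (hα0 : Tendsto α atTop (nhds 0))
    (hβ : ∀ n, β n ∈ Set.Icc (0 : ℝ) 1)
    (hβliminf : 0 < liminf β atTop)
    (hβlimsup : limsup β atTop < 1)
    (y : ℕ → H) (hy0 : y 0 ∈ Q)
    (hyrec : ∀ n, y (n + 1) = β n • y n
      + (1 - β n) • PQ (α n • f (y n) + (T (y n) - α n • F (T (y n))))) :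
    Tendsto (fun n => ‖y n - T (y n)‖) atTop (nhds 0) := by
  obtain ⟨p, hpQ, hTp⟩ := hfix
  -- all iterates stay in Q
  have hyQ : ∀ n, y n ∈ Q := by
    intro n
    induction n with
    | zero => exact hy0
    | succ n ih =>
      rw [hyrec n]
      exact hQconvex ih (hPQ _).1 (hβ n).1 (by linarith [(hβ n).2]) (by ring)
  -- degenerate case: Q is a single point
  by_cases hdeg : ∀ x ∈ Q, ∀ x' ∈ Q, x = x'
  · have h0 : ∀ n, ‖y n - T (y n)‖ = 0 := by
      intro n
      have h1 : y n = p := hdeg _ (hyQ n) _ hpQ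
      have h2 : T (y n) = p := by rw [h1, hTp]
      rw [h2, h1, sub_self, norm_zero]
    simp only [h0]
    exact tendsto_const_nhds
  push_neg at hdeg
  obtain ⟨x₀, hx₀, x₁, hx₁, hne⟩ := hdeg
  have hηκ : η ≤ κ := by
    have hpos : 0 < ‖x₀ - x₁‖ := by
      rw [norm_pos_iff, sub_ne_zero]; exact hne
    exact hpa_eta_le_kappa hpos (hFmono x₀ hx₀ x₁ hx₁)
      (real_inner_le_norm (F x₀ - F x₁) (x₀ - x₁)) (hFLip x₀ hx₀ x₁ hx₁)
  obtain ⟨hδ₀pos, hδ₀lt⟩ := hδ₀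
  have hκ2 : 0 < κ ^ 2 := by positivity
  have hδκ : δ₀ * κ ^ 2 < 2 * (η - αf) := (lt_div_iff₀ hκ2).mp hδ₀lt
  obtain ⟨τ, hτdef⟩ : ∃ τ : ℝ, τ = η - δ₀ * κ ^ 2 / 2 := ⟨_, rfl⟩
  have hθτ : αf < τ := by rw [hτdef]; linarith
  have hτpos : 0 < τ := lt_of_le_of_lt hαf hθτ
  obtain ⟨θ, hθdef⟩ : ∃ θ : ℝ, θ = τ - αf := ⟨_, rfl⟩
  have hθpos : 0 < θ := by rw [hθdef]; linarith
  have hατ' : ∀ n, α n * τ ≤ 1 / 2 := by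
    intro n
    rw [hτdef]
    exact hpa_step_half hκ hη hηκ (hα n).1 (hα n).2
  have hαθ : ∀ n, α n * θ ≤ α n * τ := by
    intro n
    have h := (hα n).1
    have := mul_nonneg h.le hαf
    rw [hθdef]
    linarith
  have hαθ0 : ∀ n, 0 ≤ α n * θ := fun n => le_of_lt (mul_pos (hα n).1 hθpos)
  -- the contraction property of I - a F
  have hcontract : ∀ u ∈ Q, ∀ v ∈ Q, ∀ a : ℝ, 0 < a → a ≤ δ₀ →
      ‖(u - a • F u) - (v - a • F v)‖ ≤ (1 - a * τ) * ‖u - v‖ := by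
    intro u hu v hv a ha haδ
    exact hpa_contract F hκ2 hτdef ha haδ
      (by rw [hτdef]; exact hpa_step_half hκ hη hηκ ha haδ)
      (hFmono u hu v hv) (hFLip u hu v hv)
  -- projection facts
  have hproj_pt : ∀ x : H, ∀ q ∈ Q, ‖PQ x - q‖ ≤ ‖x - q‖ := by
    intro x q hq
    exact hpa_proj_pt ((hPQ x).2 q hq)
  have hproj_nonexp : ∀ x x' : H, ‖PQ x - PQ x'‖ ≤ ‖x - x'‖ := by
    intro x x'
    exact hpa_proj_nonexp ((hPQ x).2 (PQ x') (hPQ x').1) ((hPQ x').2 (PQ x) (hPQ x).1)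
  -- name the key sequences
  obtain ⟨w, hw⟩ : ∃ w : ℕ → H,
      ∀ n, w n = α n • f (y n) + (T (y n) - α n • F (T (y n))) := ⟨_, fun _ => rfl⟩
  obtain ⟨z, hz⟩ : ∃ z : ℕ → H, ∀ n, z n = PQ (w n) := ⟨_, fun _ => rfl⟩
  have hzQ : ∀ n, z n ∈ Q := fun n => by rw [hz n]; exact (hPQ (w n)).1
  have hrec : ∀ n, y (n + 1) = β n • y n + (1 - β n) • z n := by
    intro n; rw [hyrec n, hz n, hw n]
  obtain ⟨s, hs⟩ : ∃ s : ℕ → ℝ, ∀ n, s n = ‖y n - p‖ := ⟨_, fun _ => rfl⟩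
  obtain ⟨d, hd⟩ : ∃ d : ℕ → ℝ, ∀ n, d n = ‖y n - z n‖ := ⟨_, fun _ => rfl⟩
  obtain ⟨u, hu⟩ : ∃ u : ℕ → ℝ, ∀ n, u n = d n ^ 2 := ⟨_, fun _ => rfl⟩
  have hs0 : ∀ n, 0 ≤ s n := fun n => by rw [hs n]; exact norm_nonneg _
  have hd0 : ∀ n, 0 ≤ d n := fun n => by rw [hd n]; exact norm_nonneg _
  have hu0 : ∀ n, 0 ≤ u n := fun n => by rw [hu n]; exact sq_nonneg _
  obtain ⟨C, hC⟩ : ∃ C : ℝ, C = ‖f p - F p‖ := ⟨_, rfl⟩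
  have hC0 : 0 ≤ C := by rw [hC]; exact norm_nonneg _
  obtain ⟨M, hM⟩ : ∃ M : ℝ, M = max (‖y 0 - p‖) (C / θ) := ⟨_, rfl⟩
  have hM0 : 0 ≤ M := by
    rw [hM]; exact le_trans (norm_nonneg _) (le_max_left _ _)
  have hθM : C ≤ θ * M := by
    have h1 : C / θ ≤ M := by rw [hM]; exact le_max_right _ _
    have h2 : C ≤ M * θ := (div_le_iff₀ hθpos).mp h1
    linarith
  -- the basic inequality for ‖w n - p‖
  have hwp : ∀ n, ‖w n - p‖ ≤ (1 - α n * θ) * s n + α n * C := by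
    intro n
    have hvec : w n - p
        = α n • (f (y n) - F p) + ((T (y n) - α n • F (T (y n))) - (p - α n • F p)) := by
      rw [hw n]
      simp only [smul_sub]
      abel
    rw [hvec]
    have h1 : ‖α n • (f (y n) - F p)‖ ≤ α n * (αf * s n + C) := by
      rw [norm_smul, Real.norm_eq_abs, abs_of_pos (hα n).1]
      have h2 : ‖f (y n) - F p‖ ≤ αf * s n + C := by
        have e : f (y n) - F p = (f (y n) - f p) + (f p - F p) := by abel
        rw [e]
        refine le_trans (norm_add_le _ _) ?_
        have := hfLip (y n) (hyQ n) p hpQ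
        rw [hs n]
        linarith
      exact mul_le_mul_of_nonneg_left h2 (hα n).1.le
    have h2 : ‖(T (y n) - α n • F (T (y n))) - (p - α n • F p)‖ ≤ (1 - α n * τ) * s n := by
      have hc := hcontract (T (y n)) (hTmaps _ (hyQ n)) p hpQ (α n) (hα n).1 (hα n).2
      refine le_trans hc ?_
      have hTn : ‖T (y n) - p‖ ≤ s n := by
        rw [hs n]
        conv_lhs => rw [show p = T p from hTp.symm]
        exact hTnonexp _ (hyQ n) _ hpQ
      have h3 : (0:ℝ) ≤ 1 - α n * τ := by linarith [hατ' n]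
      exact mul_le_mul_of_nonneg_left hTn h3
    refine le_trans (norm_add_le _ _) ?_
    have e : α n * (αf * s n + C) + (1 - α n * τ) * s n = (1 - α n * θ) * s n + α n * C := by
      rw [hθdef]; ring
    linarith
  -- boundedness
  have hzle : ∀ n, s n ≤ M → ‖z n - p‖ ≤ M := by
    intro n hsn
    have h1 : ‖z n - p‖ ≤ ‖w n - p‖ := by rw [hz n]; exact hproj_pt (w n) p hpQ
    have h2 := hwp n
    have h3 : (1 - α n * θ) * s n ≤ (1 - α n * θ) * M :=
      mul_le_mul_of_nonneg_left hsn (by linarith [hαθ n, hατ' n])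
    have h4 : α n * C ≤ α n * (θ * M) := mul_le_mul_of_nonneg_left hθM (hα n).1.le
    linarith
  have hsM : ∀ n, s n ≤ M := by
    intro n
    induction n with
    | zero => rw [hs 0, hM]; exact le_max_left _ _
    | succ n ih =>
      have hvec2 : y (n + 1) - p = β n • (y n - p) + (1 - β n) • (z n - p) := by
        rw [hrec n]
        simp only [smul_sub, sub_smul, one_smul]
        abel
      have hb0 := (hβ n).1
      have hb1 := (hβ n).2
      have h6 : s (n + 1) ≤ β n * s n + (1 - β n) * ‖z n - p‖ := by
        rw [hs (n + 1), hvec2]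
        refine le_trans (norm_add_le _ _) ?_
        rw [norm_smul, norm_smul, Real.norm_eq_abs, Real.norm_eq_abs,
          abs_of_nonneg hb0, abs_of_nonneg (by linarith : (0:ℝ) ≤ 1 - β n), hs n]
      have hzb := hzle n ih
      have h7 : β n * s n ≤ β n * M := mul_le_mul_of_nonneg_left ih hb0
      have h8 : (1 - β n) * ‖z n - p‖ ≤ (1 - β n) * M :=
        mul_le_mul_of_nonneg_left hzb (by linarith)
      linarith
  have hzM : ∀ n, ‖z n - p‖ ≤ M := fun n => hzle n (hsM n)
  obtain ⟨M', hM'⟩ : ∃ M' : ℝ, M' = αf * M + C + κ * M := ⟨_, rfl⟩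
  have hM'0 : 0 ≤ M' := by
    have h1 := mul_nonneg hαf hM0
    have h2 := mul_nonneg hκ.le hM0
    rw [hM']
    linarith
  have hfF : ∀ n, ‖f (y n) - F (T (y n))‖ ≤ M' := by
    intro n
    have e : f (y n) - F (T (y n))
        = (f (y n) - f p) + ((f p - F p) + (F p - F (T (y n)))) := by abel
    rw [e]
    refine le_trans (norm_add_le _ _) (le_trans (add_le_add le_rfl (norm_add_le _ _)) ?_)
    have h1 := hfLip (y n) (hyQ n) p hpQ
    have h2 : ‖F p - F (T (y n))‖ ≤ κ * s n := by
      rw [norm_sub_rev, hs n]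
      refine le_trans (hFLip _ (hTmaps _ (hyQ n)) p hpQ) ?_
      have hTn : ‖T (y n) - p‖ ≤ ‖y n - p‖ := by
        conv_lhs => rw [show p = T p from hTp.symm]
        exact hTnonexp _ (hyQ n) _ hpQ
      exact mul_le_mul_of_nonneg_left hTn hκ.le
    have hsn := hsM n
    have hsn' : ‖y n - p‖ = s n := (hs n).symm
    have h3 : αf * s n ≤ αf * M := mul_le_mul_of_nonneg_left hsn hαf
    have h4 : κ * s n ≤ κ * M := mul_le_mul_of_nonneg_left hsn hκ.le
    rw [hM']
    rw [hsn'] at h1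
    linarith
  have hzT : ∀ n, ‖z n - T (y n)‖ ≤ α n * M' := by
    intro n
    have h1 : ‖z n - T (y n)‖ ≤ ‖w n - T (y n)‖ := by
      rw [hz n]; exact hproj_pt (w n) _ (hTmaps _ (hyQ n))
    have e : w n - T (y n) = α n • (f (y n) - F (T (y n))) := by
      rw [hw n]
      simp only [smul_sub]
      abel
    rw [e, norm_smul, Real.norm_eq_abs, abs_of_pos (hα n).1] at h1
    exact le_trans h1 (mul_le_mul_of_nonneg_left (hfF n) (hα n).1.le)
  have hzz : ∀ n, ‖z (n + 1) - z n‖ ≤ ‖y (n + 1) - y n‖ + (α n + α (n + 1)) * M' := by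
    intro n
    have h1 : ‖z (n + 1) - z n‖ ≤ ‖w (n + 1) - w n‖ := by
      rw [hz n, hz (n + 1)]; exact hproj_nonexp _ _
    have e : w (n + 1) - w n = (T (y (n + 1)) - T (y n))
        + (α (n + 1) • (f (y (n + 1)) - F (T (y (n + 1))))
          - α n • (f (y n) - F (T (y n)))) := by
      rw [hw n, hw (n + 1)]
      simp only [smul_sub]
      abel
    have h2 : ‖w (n + 1) - w n‖ ≤ ‖y (n + 1) - y n‖ + (α n + α (n + 1)) * M' := by
      rw [e]
      refine le_trans (norm_add_le _ _) ?_
      have h3 := hTnonexp _ (hyQ (n + 1)) _ (hyQ n)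
      have h4 : ‖α (n + 1) • (f (y (n + 1)) - F (T (y (n + 1))))
          - α n • (f (y n) - F (T (y n)))‖ ≤ α (n + 1) * M' + α n * M' := by
        refine le_trans (norm_sub_le _ _) ?_
        rw [norm_smul, norm_smul, Real.norm_eq_abs, Real.norm_eq_abs,
          abs_of_pos (hα (n + 1)).1, abs_of_pos (hα n).1]
        exact add_le_add (mul_le_mul_of_nonneg_left (hfF (n + 1)) (hα (n + 1)).1.le)
          (mul_le_mul_of_nonneg_left (hfF n) (hα n).1.le)
      have h5 : (α n + α (n + 1)) * M' = α (n + 1) * M' + α n * M' := by ring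
      rw [h5]
      linarith
    exact le_trans h1 h2
  have hd1 : ∀ n, y (n + 1) - z n = β n • (y n - z n) := by
    intro n
    rw [hrec n]
    simp only [smul_sub, sub_smul, one_smul]
    abel
  have hyy : ∀ n, ‖y (n + 1) - y n‖ = (1 - β n) * d n := by
    intro n
    have e : y (n + 1) - y n = (1 - β n) • (z n - y n) := by
      rw [hrec n]
      simp only [smul_sub, sub_smul, one_smul]
      abel
    rw [e, norm_smul, Real.norm_eq_abs,
      abs_of_nonneg (by linarith [(hβ n).2] : (0:ℝ) ≤ 1 - β n), hd n, norm_sub_rev]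
  have hdstep : ∀ n, d (n + 1) ≤ d n + (α n + α (n + 1)) * M' := by
    intro n
    have h1 : d (n + 1) ≤ ‖y (n + 1) - z n‖ + ‖z n - z (n + 1)‖ := by
      rw [hd (n + 1)]
      have h := norm_add_le (y (n + 1) - z n) (z n - z (n + 1))
      rw [show (y (n + 1) - z n) + (z n - z (n + 1)) = y (n + 1) - z (n + 1) from by abel] at h
      exact h
    have h2 : ‖y (n + 1) - z n‖ = β n * d n := by
      rw [hd1 n, norm_smul, Real.norm_eq_abs, abs_of_nonneg (hβ n).1, hd n]
    have h3 : ‖z n - z (n + 1)‖ ≤ (1 - β n) * d n + (α n + α (n + 1)) * M' := by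
      rw [norm_sub_rev]
      refine le_trans (hzz n) ?_
      rw [hyy n]
    rw [h2] at h1
    linarith
  have hdM : ∀ n, d n ≤ 2 * M := by
    intro n
    have h1 : d n ≤ s n + ‖z n - p‖ := by
      rw [hd n, hs n]
      have h := norm_sub_le (y n - p) (z n - p)
      rw [show (y n - p) - (z n - p) = y n - z n from by abel] at h
      exact h
    linarith [hsM n, hzM n]
  obtain ⟨C₃, hC₃⟩ : ∃ C₃ : ℝ, C₃ = M' * (4 * M + 2 * δ₀ * M') := ⟨_, rfl⟩
  have hC₃0 : 0 ≤ C₃ := by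
    rw [hC₃]
    have h2 := mul_nonneg hδ₀pos.le hM'0
    exact mul_nonneg hM'0 (by linarith)
  have hup : ∀ n, u (n + 1) ≤ u n + (α n + α (n + 1)) * C₃ := by
    intro n
    have he0 : 0 ≤ α n + α (n + 1) := by linarith [(hα n).1.le, (hα (n + 1)).1.le]
    have heδ : α n + α (n + 1) ≤ 2 * δ₀ := by linarith [(hα n).2, (hα (n + 1)).2]
    rw [hu n, hu (n + 1), hC₃]
    exact hpa_sq_step (hd0 _) (hdstep n) (hd0 n) (hdM n) he0 heδ hM'0
  -- eventual bounds on β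
  have hBdd1 : IsBoundedUnder (· ≤ ·) atTop β := isBoundedUnder_of ⟨1, fun n => (hβ n).2⟩
  have hBdd2 : IsBoundedUnder (· ≥ ·) atTop β := isBoundedUnder_of ⟨0, fun n => (hβ n).1⟩
  obtain ⟨a, ha⟩ : ∃ a : ℝ, a = liminf β atTop / 2 := ⟨_, rfl⟩
  have ha0 : 0 < a := by rw [ha]; linarith
  obtain ⟨b, hb⟩ : ∃ b : ℝ, b = (limsup β atTop + 1) / 2 := ⟨_, rfl⟩
  have hb1 : b < 1 := by rw [hb]; linarith
  have h1 := eventually_lt_of_lt_liminf (show a < liminf β atTop by rw [ha]; linarith) hBdd2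
  have h2 := eventually_lt_of_limsup_lt (show limsup β atTop < b by rw [hb]; linarith) hBdd1
  obtain ⟨Nβ, hNβ⟩ := eventually_atTop.mp (h1.and h2)
  obtain ⟨γ, hγ⟩ : ∃ γ : ℝ, γ = a * (1 - b) := ⟨_, rfl⟩
  have hγ0 : 0 < γ := by rw [hγ]; exact mul_pos ha0 (by linarith)
  obtain ⟨C₂, hC₂⟩ : ∃ C₂ : ℝ, C₂ = 2 * M * C + δ₀ * C ^ 2 := ⟨_, rfl⟩
  have hC₂0 : 0 ≤ C₂ := by
    rw [hC₂]
    have h3 := mul_nonneg (mul_nonneg (by norm_num : (0:ℝ) ≤ 2) hM0) hC0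
    have h4 := mul_nonneg hδ₀pos.le (sq_nonneg C)
    linarith
  -- the energy inequality
  have hE : ∀ n, Nβ ≤ n → γ * u n ≤ s n ^ 2 - s (n + 1) ^ 2 + α n * C₂ := by
    intro n hn
    obtain ⟨hba, hbb⟩ := hNβ n hn
    have hb0 := (hβ n).1
    have hb1' := (hβ n).2
    have hvec2 : y (n + 1) - p = β n • (y n - p) + (1 - β n) • (z n - p) := by
      rw [hrec n]
      simp only [smul_sub, sub_smul, one_smul]
      abel
    have hid := hpa_comb_sq (β n) (y n - p) (z n - p)
    rw [show (y n - p) - (z n - p) = y n - z n from by abel] at hid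
    have hsid : s (n + 1) ^ 2 = β n * s n ^ 2 + (1 - β n) * ‖z n - p‖ ^ 2
        - β n * (1 - β n) * d n ^ 2 := by
      rw [hs (n + 1), hs n, hd n, hvec2, hid]
    have hz1 : ‖z n - p‖ ≤ s n + α n * C := by
      have hp1 : ‖z n - p‖ ≤ ‖w n - p‖ := by rw [hz n]; exact hproj_pt (w n) p hpQ
      have hp2 := hwp n
      have hp3 := mul_nonneg (hαθ0 n) (hs0 n)
      linarith
    have hz2 : ‖z n - p‖ ^ 2 ≤ s n ^ 2 + α n * C₂ := by
      have h4 : ‖z n - p‖ ^ 2 ≤ (s n + α n * C) ^ 2 :=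
        pow_le_pow_left₀ (norm_nonneg _) hz1 2
      rw [hC₂]
      exact hpa_z_sq h4 (hα n).1 (hα n).2 (hs0 n) (hsM n) hC0
    have hγβ : γ ≤ β n * (1 - β n) := by
      rw [hγ]
      exact mul_le_mul hba.le (by linarith) (by linarith) hb0
    have h6 : γ * u n ≤ β n * (1 - β n) * d n ^ 2 := by
      rw [hu n]
      exact mul_le_mul_of_nonneg_right hγβ (sq_nonneg _)
    have h7 : (1 - β n) * ‖z n - p‖ ^ 2 ≤ (1 - β n) * (s n ^ 2 + α n * C₂) :=
      mul_le_mul_of_nonneg_left hz2 (by linarith)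
    have h8 : 0 ≤ α n * C₂ := mul_nonneg (hα n).1.le hC₂0
    have h10 : 0 ≤ β n * (α n * C₂) := mul_nonneg hb0 h8
    linarith [hsid, h6, h7, h10]
  -- summed energy inequality
  have hEsum : ∀ n, Nβ ≤ n → ∀ k : ℕ,
      γ * (∑ j ∈ Finset.range k, u (n + j))
        ≤ s n ^ 2 - s (n + k) ^ 2 + C₂ * (∑ j ∈ Finset.range k, α (n + j)) := by
    intro n hn k
    induction k with
    | zero => simp
    | succ k ih =>
      rw [Finset.sum_range_succ, Finset.sum_range_succ, mul_add, mul_add]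
      have hk := hE (n + k) (le_trans hn (Nat.le_add_right n k))
      rw [show n + (k + 1) = (n + k) + 1 from rfl]
      have e : α (n + k) * C₂ = C₂ * α (n + k) := by ring
      linarith [hk, e]
  -- slow increase of u
  have hchain : ∀ m : ℕ, ∀ i : ℕ, ∀ ρ : ℝ, (∀ j, m ≤ j → α j ≤ ρ) →
      u (m + i) ≤ u m + (2 * C₃ * ρ) * i := by
    intro m i ρ hρ
    induction i with
    | zero => simp
    | succ i ih =>
      have h := hup (m + i)
      have e1 : α (m + i) ≤ ρ := hρ _ (Nat.le_add_right m i)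
      have e2 : α (m + i + 1) ≤ ρ := hρ _ (by omega)
      have h9 : (α (m + i) + α (m + i + 1)) * C₃ ≤ 2 * C₃ * ρ := by
        have h10 : α (m + i) + α (m + i + 1) ≤ 2 * ρ := by linarith
        have := mul_le_mul_of_nonneg_right h10 hC₃0
        linarith
      rw [show m + (i + 1) = (m + i) + 1 from rfl]
      push_cast
      linarith
  -- the main quantitative estimate
  have hmain : ∀ ρ : ℝ, 0 ≤ ρ → ∀ n, Nβ ≤ n → (∀ j, n ≤ j → α j ≤ ρ) → ∀ k : ℕ, 0 < k →
      γ * (k : ℝ) * u (n + k)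
        ≤ M ^ 2 + C₂ * k * ρ + γ * (2 * C₃ * ρ) * k ^ 2 := by
    intro ρ hρ n hn hρa k hk
    have h2C₃ρ : 0 ≤ 2 * C₃ * ρ := mul_nonneg (by linarith) hρ
    have h1 : ∀ j ∈ Finset.range k, u (n + k) ≤ u (n + j) + (2 * C₃ * ρ) * k := by
      intro j hj
      have hjk : j ≤ k := le_of_lt (Finset.mem_range.mp hj)
      have hc := hchain (n + j) (k - j) ρ (fun t ht => hρa t (by omega))
      rw [show n + j + (k - j) = n + k from by omega] at hc
      have hcast : ((k - j : ℕ) : ℝ) ≤ (k : ℝ) := by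
        exact_mod_cast Nat.sub_le k j
      have := mul_le_mul_of_nonneg_left hcast h2C₃ρ
      linarith
    have hsum1 : (k : ℝ) * u (n + k)
        ≤ (∑ j ∈ Finset.range k, u (n + j)) + (2 * C₃ * ρ) * k * k := by
      have hsle := Finset.sum_le_sum h1
      rw [Finset.sum_const, Finset.card_range, nsmul_eq_mul, Finset.sum_add_distrib,
        Finset.sum_const, Finset.card_range, nsmul_eq_mul] at hsle
      linarith
    have hsum2 := hEsum n hn k
    have hαsum : (∑ j ∈ Finset.range k, α (n + j)) ≤ (k : ℝ) * ρ := by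
      calc (∑ j ∈ Finset.range k, α (n + j)) ≤ ∑ _j ∈ Finset.range k, ρ :=
            Finset.sum_le_sum (fun j _ => hρa _ (Nat.le_add_right _ _))
        _ = (k : ℝ) * ρ := by rw [Finset.sum_const, Finset.card_range, nsmul_eq_mul]
    have hsq : s n ^ 2 ≤ M ^ 2 := pow_le_pow_left₀ (hs0 n) (hsM n) 2
    have hsq2 : 0 ≤ s (n + k) ^ 2 := sq_nonneg _
    have hsum2' : γ * (∑ j ∈ Finset.range k, u (n + j)) ≤ M ^ 2 + C₂ * ((k : ℝ) * ρ) := by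
      have := mul_le_mul_of_nonneg_left hαsum hC₂0
      linarith
    have hfin := mul_le_mul_of_nonneg_left hsum1 hγ0.le
    linarith [hfin, hsum2']
  -- conclude u → 0
  have hutend : Tendsto u atTop (nhds 0) := by
    rw [Metric.tendsto_atTop]
    intro ε hε
    obtain ⟨k, hk0, hkM⟩ : ∃ k : ℕ, 0 < k ∧ M ^ 2 ≤ γ * k * (ε / 4) := by
      obtain ⟨k, hk⟩ := exists_nat_ge (M ^ 2 / (γ * (ε / 4)))
      refine ⟨k + 1, Nat.succ_pos _, ?_⟩
      have hpos : 0 < γ * (ε / 4) := mul_pos hγ0 (by linarith)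
      rw [div_le_iff₀ hpos] at hk
      push_cast
      linarith [hk, hpos]
    have hk0' : (0 : ℝ) < (k : ℝ) := by exact_mod_cast hk0
    obtain ⟨ρ0, hρ0def⟩ : ∃ ρ0 : ℝ,
        ρ0 = min (γ * (ε / 4) / (C₂ + 1)) ((ε / 4) / (2 * C₃ * k + 1)) := ⟨_, rfl⟩
    have hden1 : (0 : ℝ) < C₂ + 1 := by linarith
    have hden2 : (0 : ℝ) < 2 * C₃ * k + 1 := by
      have h1 : (0:ℝ) ≤ (k:ℝ) := Nat.cast_nonneg k
      linarith [mul_nonneg (mul_nonneg (by norm_num : (0:ℝ) ≤ 2) hC₃0) h1]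
    have hρ0 : 0 < ρ0 := by
      rw [hρ0def]
      exact lt_min (div_pos (mul_pos hγ0 (by linarith)) hden1)
        (div_pos (by linarith) hden2)
    have hev : ∀ᶠ j in atTop, α j < ρ0 := hα0.eventually (gt_mem_nhds hρ0)
    obtain ⟨n₁, hn₁⟩ := eventually_atTop.mp hev
    refine ⟨max Nβ n₁ + k, fun m hm => ?_⟩
    obtain ⟨n, hn⟩ : ∃ n : ℕ, n = m - k := ⟨_, rfl⟩
    have hmaxle : max Nβ n₁ + k ≤ m := hm
    have hNβle : Nβ ≤ max Nβ n₁ := le_max_left _ _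
    have hn₁le : n₁ ≤ max Nβ n₁ := le_max_right _ _
    have hmk : m = n + k := by omega
    have hnN : Nβ ≤ n := by omega
    have hnn₁ : n₁ ≤ n := by omega
    have hρa : ∀ j, n ≤ j → α j ≤ ρ0 := fun j hj => (hn₁ j (le_trans hnn₁ hj)).le
    have hest := hmain ρ0 hρ0.le n hnN hρa k hk0
    have hbound1 : C₂ * ρ0 ≤ γ * (ε / 4) := by
      have hm1 : ρ0 ≤ γ * (ε / 4) / (C₂ + 1) := by rw [hρ0def]; exact min_le_left _ _
      have h11 : ρ0 * (C₂ + 1) ≤ γ * (ε / 4) := (le_div_iff₀ hden1).mp hm1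
      have h11b := mul_le_mul_of_nonneg_right (le_refl ρ0) hρ0.le
      linarith [hρ0.le, h11]
    have hbound2 : 2 * C₃ * (k : ℝ) * ρ0 ≤ ε / 4 := by
      have hm2 : ρ0 ≤ (ε / 4) / (2 * C₃ * k + 1) := by rw [hρ0def]; exact min_le_right _ _
      have h12 : ρ0 * (2 * C₃ * k + 1) ≤ ε / 4 := (le_div_iff₀ hden2).mp hm2
      linarith [hρ0.le, h12]
    have hgk : 0 < γ * (k : ℝ) := mul_pos hγ0 hk0'
    have hfin : u m ≤ 3 * (ε / 4) := by
      rw [hmk]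
      have h13 : C₂ * (k : ℝ) * ρ0 ≤ (k : ℝ) * (γ * (ε / 4)) := by
        have := mul_le_mul_of_nonneg_left hbound1 hk0'.le
        linarith
      have h14 : γ * (2 * C₃ * ρ0) * (k : ℝ) ^ 2 ≤ γ * (k : ℝ) * (ε / 4) := by
        have h16 := mul_le_mul_of_nonneg_left hbound2 hgk.le
        linarith [h16]
      have h15 : γ * (k : ℝ) * u (n + k) ≤ γ * (k : ℝ) * (3 * (ε / 4)) := by
        linarith [hest, hkM, h13, h14]
      exact le_of_mul_le_mul_left h15 hgk
    rw [Real.dist_eq, sub_zero, abs_of_nonneg (hu0 m)]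
    linarith
  -- u → 0 gives d → 0
  have hdtend : Tendsto d atTop (nhds 0) := by
    have hds : d = fun n => Real.sqrt (u n) := by
      funext n
      rw [hu n, Real.sqrt_sq (hd0 n)]
    rw [hds]
    have hcomp := (Real.continuous_sqrt.tendsto 0).comp hutend
    simpa only [Function.comp_def, Real.sqrt_zero] using hcomp
  -- final squeeze
  have hfinal : ∀ n, ‖y n - T (y n)‖ ≤ d n + α n * M' := by
    intro n
    have h := norm_add_le (y n - z n) (z n - T (y n))
    rw [show (y n - z n) + (z n - T (y n)) = y n - T (y n) from by abel] at h
    refine le_trans h ?_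
    have := hzT n
    rw [hd n]
    linarith
  have hgt : Tendsto (fun n => d n + α n * M') atTop (nhds 0) := by
    have h := hdtend.add (hα0.mul_const M')
    simpa only [zero_mul, add_zero] using h
  exact squeeze_zero (fun n => norm_nonneg _) hfinal hgt
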